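/- Let T(φ,ρ,A,B) denote the real-linear operator on quadruples (X,Y,p,q), with X, Y Hermitian 3×3 complex matrices and p, q ∈ ℝ, given by the Freudenthal action (X,Y,p,q) ↦ (φX + Xφ† + (ρ/3)X + 2·B*Y + qA, 2·A*X − φ†Y − Yφ − (ρ/3)Y + pB, tr(A∘Y) − ρp, tr(B∘X) + ρq). Then for every Hermitian traceless 3×3 complex matrix Q and every Hermitian 3×3 complex matrix A, the commutator satisfies T(Q,0,0,0)∘T(0,0,A,0) − T(0,0,A,0)∘T(Q,0,0,0) = T(0,0,2(A∘Q),0). In particular, the commutator of a null translation with a boost is again a null translation, with translation parameter proportional to A∘Q. -/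
import Mathlib


open Matrix BigOperators

/-- 3×3 complex matrices. -/
abbrev Mat3 := Matrix (Fin 3) (Fin 3) ℂ

/-- The Jordan product X∘Y = (XY+YX)/2. -/
noncomputable def jord (X Y : Mat3) : Mat3 := (1/2 : ℂ) • (X * Y + Y * X)

/-- The Freudenthal product. -/
noncomputable def freud (X Y : Mat3) : Mat3 :=
  jord X Y - (1/2 : ℂ) • (X.trace • Y + Y.trace • X)
    + (1/2 : ℂ) • (X.trace * Y.trace - (jord X Y).trace) • (1 : Mat3)

/-- The Freudenthal action T(φ,ρ,A,B) on quadruples (X,Y,p,q):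
(X,Y,p,q) ↦ (φX + Xφ† + (ρ/3)X + 2·B*Y + qA, 2·A*X − φ†Y − Yφ − (ρ/3)Y + pB,
tr(A∘Y) − ρp, tr(B∘X) + ρq). -/
noncomputable def T (φ : Mat3) (ρ : ℝ) (A B : Mat3) :
    Mat3 × Mat3 × ℂ × ℂ → Mat3 × Mat3 × ℂ × ℂ := fun ⟨X, Y, p, q⟩ =>
  (φ * X + X * φᴴ + ((ρ : ℂ)/3) • X + (2 : ℂ) • freud B Y + q • A,
   (2 : ℂ) • freud A X - φᴴ * Y - Y * φ - ((ρ : ℂ)/3) • Y + p • B,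
   (jord A Y).trace - (ρ : ℂ) * p,
   (jord B X).trace + (ρ : ℂ) * q)

set_option maxHeartbeats 3200000 in
/-- for Q Hermitian traceless and A Hermitian, the commutator of the
boost T(Q,0,0,0) and the null translation T(0,0,A,0) on the space of quadruples
(X,Y,p,q) with X, Y Hermitian and p, q real satisfies
T(Q,0,0,0)∘T(0,0,A,0) − T(0,0,A,0)∘T(Q,0,0,0) = T(0,0,2(A∘Q),0). -/
theorem stmt10 (Q : Mat3) (hQherm : Qᴴ = Q) (hQtr : Q.trace = 0)
    (A : Mat3) (hA : Aᴴ = A) :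
    ∀ (X Y : Mat3), Xᴴ = X → Yᴴ = Y → ∀ (p q : ℝ),
      T Q 0 0 0 (T 0 0 A 0 (X, Y, (p : ℂ), (q : ℂ)))
        - T 0 0 A 0 (T Q 0 0 0 (X, Y, (p : ℂ), (q : ℂ)))
        = T 0 0 ((2 : ℂ) • jord A Q) 0 (X, Y, (p : ℂ), (q : ℂ)) := by
  intro X Y hX hY p q
  have hQtr' : Q 2 2 = -(Q 0 0) - Q 1 1 := by
    have h := hQtr
    simp only [Matrix.trace, Matrix.diag, Fin.sum_univ_three] at h
    linear_combination h
  simp only [T, freud, jord, hQherm, hA, Prod.mk_sub_mk, Matrix.conjTranspose_zero,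
    Matrix.mul_zero, Matrix.zero_mul, mul_zero, zero_mul, smul_zero, zero_smul,
    Matrix.trace_zero, add_zero, zero_add, sub_zero, Complex.ofReal_zero, zero_div]
  refine Prod.ext ?_ (Prod.ext ?_ (Prod.ext ?_ ?_))
  · ext i j
    simp only [Matrix.sub_apply, Matrix.add_apply, Matrix.smul_apply, Matrix.mul_apply,
      Matrix.trace, Matrix.diag, Fin.sum_univ_three, Matrix.one_apply, Matrix.zero_apply,
      smul_eq_mul, mul_ite, ite_mul, mul_one, mul_zero, zero_mul]
    fin_cases i <;> fin_cases j <;> simp <;> ring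
  · ext i j
    simp only [Matrix.sub_apply, Matrix.add_apply, Matrix.smul_apply, Matrix.mul_apply,
      Matrix.trace, Matrix.diag, Fin.sum_univ_three, Matrix.one_apply, Matrix.zero_apply,
      smul_eq_mul, mul_ite, ite_mul, mul_one, mul_zero, zero_mul]
    fin_cases i <;> fin_cases j <;> simp <;> rw [hQtr'] <;> ring
  · simp only [Matrix.trace, Matrix.diag, Fin.sum_univ_three, Matrix.smul_apply,
      Matrix.add_apply, Matrix.sub_apply, Matrix.mul_apply, Matrix.zero_apply, smul_eq_mul]
    ring
  · simp only [Matrix.trace, Matrix.diag, Fin.sum_univ_three, Matrix.smul_apply,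
      Matrix.add_apply, Matrix.sub_apply, Matrix.mul_apply, Matrix.zero_apply, smul_eq_mul]
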